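/- In a parity game, for every node q, either q is in the winning region of Player 0 or q is in the winning region of Player 1 (positional determinacy: the winning regions partition the set of nodes). -/

import Mathlib

/-- A parity game: disjoint node sets for Player 0 (`Q0`) and Player 1 (`Q1`)
covering `Q`, a left-total move relation `R`, and a priority function `p`. -/
structure ParityGame (Q : Type) where
  Q0 : Set Q
  Q1 : Set Q
  disj : Disjoint Q0 Q1
  covers : Q0 ∪ Q1 = Set.univ
  R : Q → Q → Prop
  total : ∀ q, ∃ q', R q q'
  p : Q → ℕ

namespace ParityGame

variable {Q : Type} (G : ParityGame Q)

/-- The nodes of player `i` (`false` = Player 0, `true` = Player 1). -/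
def nodes (i : Bool) : Set Q := if i then G.Q1 else G.Q0

/-- An (infinite) play: a sequence of nodes agreeing with the move relation. -/
def IsPlay (π : ℕ → Q) : Prop := ∀ n, G.R (π n) (π (n + 1))

/-- The set of priorities occurring infinitely often along `π`. -/
def InfPrio (π : ℕ → Q) : Set ℕ := {c | ∀ N, ∃ n, N ≤ n ∧ G.p (π n) = c}

/-- Player `i` wins play `π` iff the minimal priority occurring infinitely
often has parity `i` (even for Player 0, odd for Player 1). -/
def WinsPlay (i : Bool) (π : ℕ → Q) : Prop :=
  if i then Odd (sInf (G.InfPrio π)) else Even (sInf (G.InfPrio π))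

/-- A strategy for player `i` maps (strict past history, current node) to a
successor; it is legal if it always chooses an `R`-successor at `i`'s nodes. -/
def Legal (i : Bool) (σ : List Q → Q → Q) : Prop :=
  ∀ h q, q ∈ G.nodes i → G.R q (σ h q)

/-- A play is consistent with a strategy `σ` of player `i` if at every node of
player `i` the next node is the one chosen by `σ` on the history so far. -/
def Consistent (i : Bool) (σ : List Q → Q → Q) (π : ℕ → Q) : Prop :=
  ∀ n, π n ∈ G.nodes i → π (n + 1) = σ (List.ofFn (fun k : Fin n => π k)) (π n)

/-- The winning region of player `i`: nodes from which `i` has a legal strategy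
all of whose consistent plays are winning for `i`. -/
def WinRegion (i : Bool) : Set Q :=
  {q | ∃ σ, G.Legal i σ ∧
    ∀ π, G.IsPlay π → π 0 = q → G.Consistent i σ π → G.WinsPlay i π}

/-- `force i X`: the nodes from which player `i` can force the next node
to be in `X`. -/
def force (i : Bool) (X : Set Q) : Set Q :=
  {q | q ∈ G.nodes i ∧ ∃ q' ∈ X, G.R q q'} ∪
  {q | q ∈ G.nodes !i ∧ ∀ q', G.R q q' → q' ∈ X}

/-- Extended-parity-game winning condition for player `i`, with visiting set
`V` and avoiding set `A`: player `i` wins `π` iff (after the first position)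
`π` hits its target set before the opponent's one, or `π` forever avoids
`V ∪ A` and satisfies `i`'s parity condition. -/
def EWinsPlay (i : Bool) (V A : Set Q) (π : ℕ → Q) : Prop :=
  (∃ n, 1 ≤ n ∧ π n ∈ (if i then A else V) ∧
    ∀ m, 1 ≤ m → m < n → π m ∉ (if i then V else A)) ∨
  ((∀ n, 1 ≤ n → π n ∉ V ∪ A) ∧ G.WinsPlay i π)

/-- The winning region of player `i` in the extended parity game on `G` with
visiting set `V` and avoiding set `A`. -/
def EWinRegion (i : Bool) (V A : Set Q) : Set Q :=
  {q | ∃ σ, G.Legal i σ ∧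
    ∀ π, G.IsPlay π → π 0 = q → G.Consistent i σ π → G.EWinsPlay i V A π}

end ParityGame

open ParityGame
/-! ### Auxiliary development for the determinacy proof -/

namespace ParityGame

open Classical

variable {Q : Type} (G : ParityGame Q)

/-- The target set of player `j` in the extended game with sets `V`, `A`. -/
def tg (V A : Set Q) (j : Bool) : Set Q := if j then A else V

variable {G}

lemma tg_union (V A : Set Q) (j : Bool) : tg V A j ∪ tg V A (!j) = V ∪ A := by
  cases j <;> simp [tg, Set.union_comm]

lemma tg_subset (V A : Set Q) (j : Bool) : tg V A j ⊆ V ∪ A := by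
  cases j <;> simp [tg, Set.subset_union_left, Set.subset_union_right]

lemma not_mem_union_iff {V A : Set Q} {j : Bool} {x : Q} :
    x ∉ V ∪ A ↔ x ∉ tg V A j ∧ x ∉ tg V A (!j) := by
  rw [← tg_union V A j]; simp [or_imp]

lemma ewins_iff {j : Bool} {V A : Set Q} {π : ℕ → Q} :
    G.EWinsPlay j V A π ↔
      ((∃ n, 1 ≤ n ∧ π n ∈ tg V A j ∧ ∀ m, 1 ≤ m → m < n → π m ∉ tg V A (!j)) ∨
       ((∀ n, 1 ≤ n → π n ∉ V ∪ A) ∧ G.WinsPlay j π)) := by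
  cases j <;> rfl

lemma mem_ewin_iff {j : Bool} {V A : Set Q} {q : Q} :
    q ∈ G.EWinRegion j V A ↔ ∃ σ, G.Legal j σ ∧
      ∀ π, G.IsPlay π → π 0 = q → G.Consistent j σ π → G.EWinsPlay j V A π := Iff.rfl

lemma node_cases (j : Bool) (q : Q) : q ∈ G.nodes j ∨ q ∈ G.nodes (!j) := by
  have h : q ∈ G.Q0 ∪ G.Q1 := by rw [G.covers]; trivial
  cases j <;> simpa [nodes, or_comm] using h

lemma node_disj {j : Bool} {q : Q} (h1 : q ∈ G.nodes j) (h2 : q ∈ G.nodes (!j)) : False := by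
  have := G.disj
  rw [Set.disjoint_left] at this
  cases j <;> simp [nodes] at h1 h2 <;> exact this ‹_› ‹_›

variable (G)

/-- Some arbitrary successor. -/
noncomputable def anySucc (q : Q) : Q := (G.total q).choose

lemma anySucc_R (q : Q) : G.R q (G.anySucc q) := (G.total q).choose_spec

variable {G}

/-- The history of a play at time `n`. -/
def hist (π : ℕ → Q) (n : ℕ) : List Q := List.ofFn fun k : Fin n => π k

@[simp] lemma hist_length (π : ℕ → Q) (n : ℕ) : (hist π n).length = n := by
  simp [hist]

lemma hist_getElem (π : ℕ → Q) {n k : ℕ} (h : k < n) :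
    (hist π n)[k]'(by simpa using h) = π k := by
  simp [hist]

lemma hist_succ (π : ℕ → Q) (n : ℕ) : hist π (n + 1) = hist π n ++ [π n] := by
  simp only [hist]
  rw [List.ofFn_succ']
  simp [List.concat_eq_append]

lemma hist_getD (π : ℕ → Q) {n k : ℕ} (h : k < n) (d : Q) :
    (hist π n).getD k d = π k := by
  rw [List.getD_eq_getElem _ _ (by simpa using h), hist_getElem _ h]

lemma hist_drop (π : ℕ → Q) (n N : ℕ) :
    (hist π n).drop N = hist (fun u => π (N + u)) (n - N) := by
  apply List.ext_getElem
  · simp [hist]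
  · intro k h1 h2
    simp [hist, List.getElem_drop]

lemma ofFn_concat_head {k : ℕ} (f : Fin k → Q) (q : Q) :
    (List.ofFn f ++ [q]).head (by simp) = if h : 0 < k then f ⟨0, h⟩ else q := by
  cases k with
  | zero => simp
  | succ m => simp [List.ofFn_succ]

lemma infPrio_shift (π : ℕ → Q) (N : ℕ) :
    G.InfPrio (fun k => π (N + k)) = G.InfPrio π := by
  ext c
  constructor
  · intro h M
    obtain ⟨n, hn, hc⟩ := h M
    exact ⟨N + n, by omega, hc⟩
  · intro h M
    obtain ⟨n, hn, hc⟩ := h (N + M)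
    refine ⟨n - N, by omega, ?_⟩
    have h2 : N + (n - N) = n := by omega
    simpa [h2] using hc

lemma winsPlay_shift {j : Bool} (π : ℕ → Q) (N : ℕ) :
    G.WinsPlay j (fun k => π (N + k)) ↔ G.WinsPlay j π := by
  unfold WinsPlay
  rw [infPrio_shift]

/-! ### Extending a consistent finite prefix to a consistent play -/

variable (G)

open Classical in
/-- Extend the prefix `g 0, …, g K` to an infinite play following `σ` at
`j`'s nodes and arbitrary moves elsewhere. -/
noncomputable def extPlay (σ : List Q → Q → Q) (j : Bool) (g : ℕ → Q) (K : ℕ) : ℕ → Q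
  | 0 => g 0
  | (n + 1) =>
    if n + 1 ≤ K then g (n + 1)
    else
      let q := extPlay σ j g K n
      if q ∈ G.nodes j then σ (List.ofFn fun k : Fin n => extPlay σ j g K k) q
      else G.anySucc q
  termination_by n => n
  decreasing_by
  all_goals first
  | exact Nat.lt_succ_of_lt k.isLt
  | exact Nat.lt_succ_self n

variable {G}

section extPlay

variable {σ : List Q → Q → Q} {j : Bool} {g : ℕ → Q} {K : ℕ}

lemma extPlay_zero : extPlay G σ j g K 0 = g 0 := by simp only [extPlay]

lemma extPlay_succ (n : ℕ) : extPlay G σ j g K (n + 1) =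
    if n + 1 ≤ K then g (n + 1)
    else
      let q := extPlay G σ j g K n
      if q ∈ G.nodes j then σ (List.ofFn fun k : Fin n => extPlay G σ j g K k) q
      else G.anySucc q := by
  conv_lhs => rw [extPlay]

lemma extPlay_agree {n : ℕ} (h : n ≤ K) : extPlay G σ j g K n = g n := by
  cases n with
  | zero => exact extPlay_zero
  | succ m => rw [extPlay_succ, if_pos h]

lemma extPlay_hist_agree {n : ℕ} (h : n ≤ K) :
    hist (extPlay G σ j g K) n = hist g n := by
  unfold hist
  congr 1
  funext k
  exact extPlay_agree (le_trans (le_of_lt k.isLt) h)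

lemma extPlay_isPlay (hσ : G.Legal j σ) (hg : ∀ k, k < K → G.R (g k) (g (k + 1))) :
    G.IsPlay (extPlay G σ j g K) := by
  intro n
  by_cases h : n + 1 ≤ K
  · rw [extPlay_succ, if_pos h, extPlay_agree (by omega)]
    exact hg n (by omega)
  · rw [extPlay_succ, if_neg h]
    by_cases hq : extPlay G σ j g K n ∈ G.nodes j
    · simp only [if_pos hq]
      exact hσ _ _ hq
    · simp only [if_neg hq]
      exact G.anySucc_R _

lemma extPlay_consistent
    (hg : ∀ k, k < K → g k ∈ G.nodes j → g (k + 1) = σ (hist g k) (g k)) :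
    G.Consistent j σ (extPlay G σ j g K) := by
  intro n hn
  by_cases h : n + 1 ≤ K
  · rw [extPlay_succ, if_pos h]
    have h1 : extPlay G σ j g K n = g n := extPlay_agree (by omega)
    have h2 : List.ofFn (fun k : Fin n => extPlay G σ j g K k) = hist g n := by
      rw [show (List.ofFn fun k : Fin n => extPlay G σ j g K k) =
        hist (extPlay G σ j g K) n from rfl]
      exact extPlay_hist_agree (by omega)
    rw [h2, h1]
    exact hg n (by omega) (h1 ▸ hn)
  · rw [extPlay_succ, if_neg h]
    simp only [if_pos hn]

end extPlay

/-! ### Attractors -/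

variable (G)

/-- Attractor layers for player `j` towards `Tgt`, within `Dom`. -/
def attrN (j : Bool) (Tgt Dom : Set Q) : ℕ → Set Q
  | 0 => ∅
  | n + 1 => attrN j Tgt Dom n ∪
      {q | q ∈ Dom ∧
        ((q ∈ G.nodes j ∧ ∃ q', G.R q q' ∧ (q' ∈ Tgt ∨ q' ∈ attrN j Tgt Dom n)) ∨
         (q ∈ G.nodes (!j) ∧ ∀ q', G.R q q' → (q' ∈ Tgt ∨ q' ∈ attrN j Tgt Dom n)))}

/-- The attractor of player `j` towards `Tgt`, within `Dom`. -/
def attrS (j : Bool) (Tgt Dom : Set Q) : Set Q := ⋃ n, G.attrN j Tgt Dom n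

variable {G}

section attr

variable {j : Bool} {Tgt Dom : Set Q}

lemma attrN_subset_dom (n : ℕ) : G.attrN j Tgt Dom n ⊆ Dom := by
  induction n with
  | zero => simp [attrN]
  | succ m ih =>
    intro q hq
    rcases hq with h | h
    · exact ih h
    · exact h.1

lemma attrN_mono {m n : ℕ} (h : m ≤ n) : G.attrN j Tgt Dom m ⊆ G.attrN j Tgt Dom n := by
  induction n with
  | zero => simpa [Nat.le_zero.mp h] using subset_rfl
  | succ k ih =>
    rcases Nat.lt_or_ge m (k+1) with h' | h'
    · exact (ih (by omega)).trans (by intro q hq; exact Or.inl hq)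
    · have : m = k + 1 := by omega
      subst this; exact subset_rfl

lemma attrS_subset_dom : G.attrS j Tgt Dom ⊆ Dom := by
  intro q hq
  obtain ⟨n, hn⟩ := Set.mem_iUnion.mp hq
  exact attrN_subset_dom n hn

lemma mem_attrS {q : Q} : q ∈ G.attrS j Tgt Dom ↔ ∃ n, q ∈ G.attrN j Tgt Dom n :=
  Set.mem_iUnion

lemma attrS_step_j {q q' : Q} (hD : q ∈ Dom) (hj : q ∈ G.nodes j) (hR : G.R q q')
    (hq' : q' ∈ Tgt) : q ∈ G.attrS j Tgt Dom :=
  mem_attrS.mpr ⟨1, Or.inr ⟨hD, Or.inl ⟨hj, q', hR, Or.inl hq'⟩⟩⟩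

lemma attrS_step_opp {q : Q} (hD : q ∈ Dom) (hj : q ∈ G.nodes (!j))
    (hq' : ∀ q', G.R q q' → q' ∈ Tgt) : q ∈ G.attrS j Tgt Dom :=
  mem_attrS.mpr ⟨1, Or.inr ⟨hD, Or.inr ⟨hj, fun q' hR => Or.inl (hq' q' hR)⟩⟩⟩

lemma attrN_inv_j {q : Q} {n : ℕ} (hq : q ∈ G.attrN j Tgt Dom n) (hj : q ∈ G.nodes j) :
    ∃ q', G.R q q' ∧ (q' ∈ Tgt ∨ q' ∈ G.attrN j Tgt Dom (n - 1)) := by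
  induction n with
  | zero => simp [attrN] at hq
  | succ m ih =>
    rcases hq with h | ⟨hD, h⟩
    · obtain ⟨q', hR, hq'⟩ := ih h
      exact ⟨q', hR, hq'.imp id fun hh => attrN_mono (by omega) hh⟩
    · rcases h with ⟨_, q', hR, hq'⟩ | ⟨hopp, _⟩
      · exact ⟨q', hR, by simpa using hq'⟩
      · exact absurd (node_disj hj hopp) (by simp)

lemma attrN_inv_opp {q : Q} {n : ℕ} (hq : q ∈ G.attrN j Tgt Dom n) (hopp : q ∈ G.nodes (!j)) :
    ∀ q', G.R q q' → (q' ∈ Tgt ∨ q' ∈ G.attrN j Tgt Dom (n - 1)) := by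
  induction n with
  | zero => simp [attrN] at hq
  | succ m ih =>
    rcases hq with h | ⟨hD, h⟩
    · intro q' hR
      exact (ih h q' hR).imp id fun hh => attrN_mono (by omega) hh
    · rcases h with ⟨hj, _⟩ | ⟨_, hall⟩
      · exact absurd (node_disj hj hopp) (by simp)
      · intro q' hR
        simpa using hall q' hR

variable (G) in
open Classical in
/-- A rank-decreasing attractor move. -/
noncomputable def amove (j : Bool) (Tgt Dom : Set Q) (q : Q) : Q :=
  if h : q ∈ G.nodes j ∧ ∃ n, ∃ q', G.R q q' ∧ (q' ∈ Tgt ∨ q' ∈ G.attrN j Tgt Dom n) then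
    (Nat.find_spec h.2).choose
  else G.anySucc q

lemma amove_R (q : Q) : G.R q (G.amove j Tgt Dom q) := by
  rw [amove]
  split
  · next h => exact (Nat.find_spec h.2).choose_spec.1
  · exact G.anySucc_R q

lemma amove_spec {q : Q} {n : ℕ} (hq : q ∈ G.attrN j Tgt Dom n) (hj : q ∈ G.nodes j) :
    G.amove j Tgt Dom q ∈ Tgt ∨ G.amove j Tgt Dom q ∈ G.attrN j Tgt Dom (n - 1) := by
  obtain ⟨q', hR, hq'⟩ := attrN_inv_j hq hj
  have h : q ∈ G.nodes j ∧ ∃ m, ∃ q'', G.R q q'' ∧ (q'' ∈ Tgt ∨ q'' ∈ G.attrN j Tgt Dom m) :=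
    ⟨hj, n - 1, q', hR, hq'⟩
  rw [amove, dif_pos h]
  have hle : Nat.find h.2 ≤ n - 1 := Nat.find_le ⟨q', hR, hq'⟩
  exact (Nat.find_spec h.2).choose_spec.2.imp id fun hh => attrN_mono hle hh

/-- Core reachability property of the attractor. -/
lemma attrReach {π : ℕ → Q} {t₀ : ℕ} (hplay : G.IsPlay π)
    (hσ : ∀ u, t₀ ≤ u → (∀ v, t₀ ≤ v → v ≤ u → π v ∈ G.attrS j Tgt Dom \ Tgt) →
      π u ∈ G.nodes j → π (u + 1) = G.amove j Tgt Dom (π u)) :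
    ∀ n t₀', t₀ ≤ t₀' → π t₀' ∈ G.attrN j Tgt Dom n →
      (∀ v, t₀ ≤ v → v < t₀' → π v ∈ G.attrS j Tgt Dom \ Tgt) →
      ∃ t, t₀' ≤ t ∧ π t ∈ Tgt ∧
        ∀ v, t₀' ≤ v → v < t → π v ∈ G.attrS j Tgt Dom \ Tgt := by
  intro n
  induction n with
  | zero => intro t₀' _ h _; simp [attrN] at h
  | succ m ih =>
    intro t₀' ht₀' hmem hctx
    by_cases hTgt : π t₀' ∈ Tgt
    · exact ⟨t₀', le_rfl, hTgt, fun v h1 h2 => absurd (lt_of_le_of_lt h1 h2) (lt_irrefl _)⟩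
    have hqS : π t₀' ∈ G.attrS j Tgt Dom \ Tgt := ⟨mem_attrS.mpr ⟨m + 1, hmem⟩, hTgt⟩
    have hctx' : ∀ v, t₀ ≤ v → v ≤ t₀' → π v ∈ G.attrS j Tgt Dom \ Tgt := by
      intro v h1 h2
      rcases Nat.lt_or_ge v t₀' with h | h
      · exact hctx v h1 h
      · have : v = t₀' := by omega
        subst this; exact hqS
    have hnext : π (t₀' + 1) ∈ Tgt ∨ π (t₀' + 1) ∈ G.attrN j Tgt Dom m := by
      rcases node_cases j (π t₀') with hj | hopp
      · rw [hσ t₀' ht₀' hctx' hj]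
        simpa using amove_spec hmem hj
      · simpa using attrN_inv_opp hmem hopp (π (t₀' + 1)) (hplay t₀')
    rcases hnext with h | h
    · refine ⟨t₀' + 1, by omega, h, fun v h1 h2 => ?_⟩
      have : v = t₀' := by omega
      subst this; exact hqS
    · obtain ⟨t, ht1, ht2, ht3⟩ := ih (t₀' + 1) (by omega) h
        (by
          intro v h1 h2
          rcases Nat.lt_or_ge v t₀' with h' | h'
          · exact hctx v h1 h'
          · have : v = t₀' := by omega
            subst this; exact hqS)
      refine ⟨t, by omega, ht2, fun v h1 h2 => ?_⟩
      rcases Nat.lt_or_ge v (t₀' + 1) with h' | h'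
      · have : v = t₀' := by omega
        subst this; exact hqS
      · exact ht3 v h' h2

end attr

/-! ### Longest suffix inside a set -/

open Classical in
/-- The longest suffix of `h` all of whose elements lie in `P`. -/
noncomputable def lastSeg (P : Set Q) (h : List Q) : List Q :=
  (h.reverse.takeWhile (fun x => decide (x ∈ P))).reverse

@[simp] lemma lastSeg_nil (P : Set Q) : lastSeg P ([] : List Q) = [] := by
  simp [lastSeg]

lemma lastSeg_concat_mem {P : Set Q} {x : Q} (h : List Q) (hx : x ∈ P) :
    lastSeg P (h ++ [x]) = lastSeg P h ++ [x] := by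
  simp [lastSeg, List.takeWhile_cons, hx]

lemma lastSeg_concat_not {P : Set Q} {x : Q} (h : List Q) (hx : x ∉ P) :
    lastSeg P (h ++ [x]) = [] := by
  simp [lastSeg, List.takeWhile_cons, hx]

lemma lastSeg_hist {P : Set Q} {π : ℕ → Q} {N : ℕ} (hN : N = 0 ∨ π (N - 1) ∉ P) :
    ∀ n, N ≤ n → (∀ u, N ≤ u → u < n → π u ∈ P) →
      lastSeg P (hist π n) = hist (fun u => π (N + u)) (n - N) := by
  have base : lastSeg P (hist π N) = [] := by
    rcases hN with h | h
    · subst h; simp [hist]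
    · rcases Nat.eq_zero_or_pos N with h0 | h0
      · subst h0; simp [hist]
      · have : N = (N - 1) + 1 := by omega
        rw [this, hist_succ]
        exact lastSeg_concat_not _ h
  intro n
  induction n with
  | zero =>
    intro h1 _
    have : N = 0 := by omega
    subst this
    simpa [hist] using base
  | succ m ih =>
    intro h1 h2
    rcases Nat.lt_or_ge m N with h' | h'
    · have : N = m + 1 := by omega
      subst this
      simpa [hist] using base
    · rw [hist_succ, lastSeg_concat_mem _ (h2 m h' (by omega)), ih h' (fun u hu1 hu2 => h2 u hu1 (by omega))]
      have hm : m + 1 - N = (m - N) + 1 := by omega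
      rw [hm, hist_succ]
      have : N + (m - N) = m := by omega
      simp [this]

lemma hist_cons (π : ℕ → Q) (n : ℕ) :
    hist π (n + 1) = π 0 :: hist (fun u => π (1 + u)) n := by
  simp only [hist, List.ofFn_succ, Fin.val_zero, Fin.val_succ]
  refine congrArg₂ List.cons rfl ?_
  exact congrArg List.ofFn (funext fun i => by rw [Nat.add_comm])

lemma hist_headD (π : ℕ → Q) (n : ℕ) (d : Q) :
    (hist π n).headD d = if n = 0 then d else π 0 := by
  cases n with
  | zero => simp [hist]
  | succ m => rw [hist_cons]; simp

/-! ### Monotonicity and glueing -/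

lemma ewin_mono {j : Bool} {V A V' A' : Set Q}
    (h1 : tg V' A' j = tg V A j) (h2 : tg V A (!j) ⊆ tg V' A' (!j)) :
    G.EWinRegion j V' A' ⊆ G.EWinRegion j V A := by
  have hVA : V ∪ A ⊆ V' ∪ A' := by
    rw [← tg_union V A j, ← tg_union V' A' j, h1]
    exact Set.union_subset_union_right _ h2
  rintro q ⟨σ, hleg, hwin⟩
  refine ⟨σ, hleg, fun π hp h0 hc => ?_⟩
  rcases ewins_iff.mp (hwin π hp h0 hc) with ⟨n, hn, hmem, hpr⟩ | ⟨hav, hpar⟩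
  · exact ewins_iff.mpr (Or.inl ⟨n, hn, h1 ▸ hmem, fun m hm1 hm2 hmem' => hpr m hm1 hm2 (h2 hmem')⟩)
  · exact ewins_iff.mpr (Or.inr ⟨fun n hn hmem' => hav n hn (hVA hmem'), hpar⟩)

lemma ewins_glue {j : Bool} {V A : Set Q} {π : ℕ → Q} {t : ℕ}
    (h : ∀ v, 1 ≤ v → v ≤ t → π v ∉ V ∪ A)
    (hw : G.EWinsPlay j V A (fun k => π (t + k))) : G.EWinsPlay j V A π := by
  rcases ewins_iff.mp hw with ⟨k, hk, hmem, hpr⟩ | ⟨hav, hpar⟩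
  · refine ewins_iff.mpr (Or.inl ⟨t + k, by omega, hmem, fun m hm1 hm2 hmem' => ?_⟩)
    rcases le_or_gt m t with h' | h'
    · exact h m hm1 h' (tg_subset V A (!j) hmem')
    · refine hpr (m - t) (by omega) (by omega) ?_
      have : t + (m - t) = m := by omega
      simpa [this] using hmem'
  · refine ewins_iff.mpr (Or.inr ⟨fun n hn hmem' => ?_, (winsPlay_shift π t).mp hpar⟩)
    rcases le_or_gt n t with h' | h'
    · exact h n hn h' hmem'
    · refine hav (n - t) (by omega) ?_
      have : t + (n - t) = n := by omega
      simpa [this] using hmem'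

/-! ### A canonical winning strategy for each node of the winning region -/

variable (G) in
open Classical in
noncomputable def wstrat (j : Bool) (V A : Set Q) (r : Q) : List Q → Q → Q :=
  if h : r ∈ G.EWinRegion j V A then h.choose else fun _ x => G.anySucc x

lemma wstrat_legal (j : Bool) (V A : Set Q) (r : Q) : G.Legal j (G.wstrat j V A r) := by
  rw [wstrat]
  split
  · next h => exact h.choose_spec.1
  · intro h q _; exact G.anySucc_R q

lemma wstrat_win {j : Bool} {V A : Set Q} {r : Q} (h : r ∈ G.EWinRegion j V A)
    {π : ℕ → Q} (hp : G.IsPlay π) (h0 : π 0 = r)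
    (hc : G.Consistent j (G.wstrat j V A r) π) : G.EWinsPlay j V A π := by
  rw [wstrat, dif_pos h] at hc
  exact h.choose_spec.2 π hp h0 hc

/-! ### The one-step lemma -/

lemma onestep {j : Bool} {V A : Set Q} {q : Q}
    (h : (q ∈ G.nodes j ∧ ∃ x, G.R q x ∧
            (x ∈ tg V A j ∨ (x ∉ tg V A (!j) ∧ x ∈ G.EWinRegion j V A))) ∨
         (q ∈ G.nodes (!j) ∧ ∀ x, G.R q x →
            (x ∈ tg V A j ∨ (x ∉ tg V A (!j) ∧ x ∈ G.EWinRegion j V A)))) :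
    q ∈ G.EWinRegion j V A := by
  classical
  set Gd : Set Q := {x | x ∈ tg V A j ∨ (x ∉ tg V A (!j) ∧ x ∈ G.EWinRegion j V A)} with hGd
  let fm : Q → Q := fun x => if hx : ∃ y, G.R x y ∧ y ∈ Gd then hx.choose else G.anySucc x
  have fm_R : ∀ x, G.R x (fm x) := by
    intro x
    simp only [fm]
    split
    · next hx => exact hx.choose_spec.1
    · exact G.anySucc_R x
  let σ : List Q → Q → Q := fun hh x =>
    match hh with
    | [] => fm x
    | _ :: t => G.wstrat j V A (t.headD x) t x
  have hleg : G.Legal j σ := by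
    intro hh x hx
    match hh with
    | [] => exact fm_R x
    | a :: t => exact wstrat_legal j V A (t.headD x) t x hx
  refine ⟨σ, hleg, fun π hp h0 hc => ?_⟩
  -- the first move lands in `Gd`
  have hπ1 : π 1 ∈ Gd := by
    rcases h with ⟨hj, x, hR, hGdx⟩ | ⟨hopp, hall⟩
    · have hstep := hc 0 (h0 ▸ hj)
      have e : (List.ofFn fun l : Fin 0 => π ↑l) = ([] : List Q) := by simp
      rw [e] at hstep
      simp only [σ] at hstep
      rw [hstep, h0]
      simp only [fm]
      rw [dif_pos ⟨x, hR, hGdx⟩]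
      exact (Exists.choose_spec (⟨x, hR, hGdx⟩ : ∃ y, G.R q y ∧ y ∈ Gd)).2
    · exact hall (π 1) (h0 ▸ hp 0)
  by_cases h1 : π 1 ∈ tg V A j
  · exact ewins_iff.mpr (Or.inl ⟨1, le_rfl, h1, fun m hm1 hm2 => by omega⟩)
  have h1' : π 1 ∉ tg V A (!j) ∧ π 1 ∈ G.EWinRegion j V A := by
    rcases hπ1 with h' | h'
    · exact absurd h' h1
    · exact h'
  -- the tail is consistent with the winning strategy of `π 1`
  set π' : ℕ → Q := fun k => π (1 + k) with hπ'
  have hp' : G.IsPlay π' := by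
    intro k
    have := hp (1 + k)
    simpa [π', Nat.add_assoc] using this
  have hc' : G.Consistent j (G.wstrat j V A (π 1)) π' := by
    intro k hk
    have hk2 : π (k + 1) ∈ G.nodes j := by
      have e : π' k = π (k + 1) := by rw [hπ']; show π (1 + k) = π (k + 1); congr 1; omega
      rwa [e] at hk
    have this1 := hc (k + 1) hk2
    have e1 : (List.ofFn fun l : Fin (k + 1) => π ↑l) = hist π (k + 1) := rfl
    rw [e1, hist_cons] at this1
    simp only [σ] at this1
    have e2 : (hist (fun u => π (1 + u)) k).headD (π (k + 1)) = π 1 := by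
      rw [hist_headD]
      split
      · next h0 => subst h0; norm_num
      · norm_num
    rw [e2] at this1
    show π' (k + 1) = G.wstrat j V A (π 1) (List.ofFn fun l : Fin k => π' ↑l) (π' k)
    have e3 : (List.ofFn fun l : Fin k => π' ↑l) = hist (fun u => π (1 + u)) k := by
      rw [hπ']; rfl
    have e4 : π' (k + 1) = π (k + 1 + 1) := by
      rw [hπ']; show π (1 + (k + 1)) = π (k + 1 + 1); congr 1; omega
    have e5 : π' k = π (k + 1) := by rw [hπ']; show π (1 + k) = π (k + 1); congr 1; omega
    rw [e3, e4, e5]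
    exact this1
  have hw' := wstrat_win h1'.2 hp' rfl hc'
  refine ewins_glue (t := 1) (fun v hv1 hv2 => ?_) hw'
  have : v = 1 := by omega
  subst this
  exact (not_mem_union_iff (j := j)).mpr ⟨h1, h1'.1⟩

lemma isPlay_shift {π : ℕ → Q} (hp : G.IsPlay π) (N : ℕ) :
    G.IsPlay (fun k => π (N + k)) := by
  intro k
  have := hp (N + k)
  simpa [Nat.add_assoc] using this

/-! ### The main transfer lemma -/

lemma transfer {j : Bool} {V A V' A' W : Set Q}
    (hWD : W ⊆ (V ∪ A)ᶜ)
    (hW : ∀ r ∈ W, r ∈ G.EWinRegion j V A)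
    (hTj : tg V A j ⊆ tg V' A' j)
    (hTj' : tg V' A' j ⊆ tg V A j ∪ W ∪ G.attrS j (W ∪ tg V A j) (V ∪ A)ᶜ)
    (hWa : W ∪ G.attrS j (W ∪ tg V A j) (V ∪ A)ᶜ ⊆ tg V' A' j)
    (hTnj : tg V A (!j) ⊆ tg V' A' (!j)) :
    G.EWinRegion j V' A' ⊆ G.EWinRegion j V A := by
  classical
  have hVA' : V ∪ A ⊆ V' ∪ A' := by
    rw [← tg_union V A j, ← tg_union V' A' j]
    exact Set.union_subset (hTj.trans (Set.subset_union_left))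
      (hTnj.trans (Set.subset_union_right))
  rintro q₀ ⟨σ, hσleg, hσwin⟩
  set D : Set Q := (V ∪ A)ᶜ with hD
  set Tt : Set Q := W ∪ tg V A j with hTt
  set att : Set Q := G.attrS j Tt D with hatt
  let σ' : List Q → Q → Q := fun h x =>
    if hx : ∃ k, k ≤ h.length ∧ (h ++ [x]).getD k x ∈ W then
      G.wstrat j V A ((h ++ [x]).getD (Nat.find hx) x) (h.drop (Nat.find hx)) x
    else if x ∈ att then G.amove j Tt D x
    else σ h x
  have hleg : G.Legal j σ' := by
    intro h x hx
    simp only [σ']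
    split
    · exact wstrat_legal j V A _ _ x hx
    · split
      · exact G.amove_R x
      · exact hσleg h x hx
  refine ⟨σ', hleg, fun π hp h0 hc => ?_⟩
  -- evaluation of the strategy on the actual play
  have hceval : ∀ u, π u ∈ G.nodes j → π (u + 1) = σ' (hist π u) (π u) := by
    intro u hu
    have := hc u hu
    exact this
  -- SWITCH: if the play reaches `W` with a clean prefix, player `j` wins.
  have S : ∀ t₀, π t₀ ∈ W → (∀ v, v < t₀ → π v ∉ W) →
      (∀ v, 1 ≤ v → v < t₀ → π v ∉ V ∪ A) → G.EWinsPlay j V A π := by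
    intro t₀ hWt₀ hnoW hclean
    have hctail : G.Consistent j (G.wstrat j V A (π t₀)) (fun k => π (t₀ + k)) := by
      intro k hk
      have hcc := hceval (t₀ + k) hk
      simp only [σ'] at hcc
      have hlen : (hist π (t₀ + k)).length = t₀ + k := hist_length π _
      have hconc : hist π (t₀ + k) ++ [π (t₀ + k)] = hist π (t₀ + k + 1) :=
        (hist_succ π _).symm
      have hx : ∃ k', k' ≤ (hist π (t₀ + k)).length ∧
          (hist π (t₀ + k) ++ [π (t₀ + k)]).getD k' (π (t₀ + k)) ∈ W := by
        refine ⟨t₀, by omega, ?_⟩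
        rw [hconc, hist_getD π (by omega)]
        exact hWt₀
      rw [dif_pos hx] at hcc
      have hfind : Nat.find hx = t₀ := by
        rw [Nat.find_eq_iff]
        refine ⟨⟨by omega, by rw [hconc, hist_getD π (by omega)]; exact hWt₀⟩, ?_⟩
        intro m hm ⟨_, hmem⟩
        rw [hconc, hist_getD π (by omega)] at hmem
        exact hnoW m hm hmem
      rw [hfind, hconc, hist_getD π (by omega), hist_drop] at hcc
      have harith : t₀ + k - t₀ = k := by omega
      rw [harith] at hcc
      show π (t₀ + (k + 1)) = _
      have : t₀ + (k + 1) = t₀ + k + 1 := by omega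
      rw [this, hcc]
      rfl
    have hwt := wstrat_win (hW _ hWt₀) (isPlay_shift hp t₀) rfl hctail
    refine ewins_glue (t := t₀) (fun v hv1 hv2 => ?_) hwt
    rcases Nat.lt_or_ge v t₀ with h' | h'
    · exact hclean v hv1 h'
    · have : v = t₀ := by omega
      subst this
      exact hWD hWt₀
  -- ATTRACT: if the play reaches the attractor with a clean prefix, `j` wins.
  have K : ∀ t₀, π t₀ ∈ att → (∀ v, v < t₀ → π v ∉ W) →
      (∀ v, 1 ≤ v → v < t₀ → π v ∉ V ∪ A) → G.EWinsPlay j V A π := by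
    intro t₀ hat₀ hnoW hclean
    obtain ⟨n, hn⟩ := mem_attrS.mp hat₀
    have hamove : ∀ u, t₀ ≤ u → (∀ v, t₀ ≤ v → v ≤ u → π v ∈ G.attrS j Tt D \ Tt) →
        π u ∈ G.nodes j → π (u + 1) = G.amove j Tt D (π u) := by
      intro u hu hctx hunode
      have hcc := hceval u hunode
      simp only [σ'] at hcc
      have hnox : ¬ ∃ k', k' ≤ (hist π u).length ∧
          (hist π u ++ [π u]).getD k' (π u) ∈ W := by
        rintro ⟨k', hk', hmem⟩
        rw [hist_length] at hk'
        rw [show hist π u ++ [π u] = hist π (u + 1) from (hist_succ π u).symm,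
          hist_getD π (by omega)] at hmem
        rcases Nat.lt_or_ge k' t₀ with h' | h'
        · exact hnoW k' h' hmem
        · exact ((hctx k' h' hk').2) (Or.inl hmem)
      rw [dif_neg hnox] at hcc
      have hmem : π u ∈ att := (hctx u hu le_rfl).1
      rw [if_pos hmem] at hcc
      exact hcc
    obtain ⟨t, ht0, htT, hint⟩ := attrReach hp hamove n t₀ le_rfl hn
      (fun v h1 h2 => absurd (lt_of_le_of_lt h1 h2) (lt_irrefl _))
    have hintD : ∀ v, t₀ ≤ v → v < t → π v ∉ V ∪ A := by
      intro v h1 h2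
      have := (hint v h1 h2).1
      have hvD : π v ∈ D := attrS_subset_dom this
      simpa [hD] using hvD
    rcases htT with htW | htg
    · refine S t htW (fun v hv => ?_) (fun v hv1 hv2 => ?_)
      · rcases Nat.lt_or_ge v t₀ with h' | h'
        · exact hnoW v h'
        · exact fun hmem => (hint v h' hv).2 (Or.inl hmem)
      · rcases Nat.lt_or_ge v t₀ with h' | h'
        · exact hclean v hv1 h'
        · exact hintD v h' hv2
    · have htpos : 1 ≤ t := by
        rcases Nat.eq_zero_or_pos t with h' | h'
        · exfalso
          subst h'
          have ht₀0 : t₀ = 0 := by omega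
          subst ht₀0
          have : π 0 ∈ D := attrS_subset_dom hat₀
          simp only [hD, Set.mem_compl_iff] at this
          exact this (tg_subset V A j htg)
        · exact h'
      refine ewins_iff.mpr (Or.inl ⟨t, htpos, htg, fun m hm1 hm2 hmem => ?_⟩)
      rcases Nat.lt_or_ge m t₀ with h' | h'
      · exact hclean m hm1 h' (tg_subset V A (!j) hmem)
      · exact hintD m h' hm2 (tg_subset V A (!j) hmem)
  -- now the main case distinction
  by_cases h00 : π 0 ∈ W
  · exact S 0 h00 (by omega) (by omega)
  by_cases h01 : π 0 ∈ att
  · exact K 0 h01 (fun v hv => by omega) (fun v hv1 hv2 => by omega)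
  by_cases hEv : ∃ n, 1 ≤ n ∧ π n ∈ tg V A j ∪ W ∪ att
  · set n₁ := Nat.find hEv with hn₁
    have hEv1 : 1 ≤ n₁ ∧ π n₁ ∈ tg V A j ∪ W ∪ att := Nat.find_spec hEv
    have hmin : ∀ m, m < n₁ → ¬(1 ≤ m ∧ π m ∈ tg V A j ∪ W ∪ att) :=
      fun m hm => Nat.find_min hEv hm
    have prefW : ∀ v, v < n₁ → π v ∉ W := by
      intro v hv hmem
      rcases Nat.eq_zero_or_pos v with h' | h'
      · subst h'; exact h00 hmem
      · exact hmin v hv ⟨h', Or.inl (Or.inr hmem)⟩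
    have hpre : ∀ u, u < n₁ → π u ∈ G.nodes j → π (u + 1) = σ (hist π u) (π u) := by
      intro u hu hunode
      have hcc := hceval u hunode
      simp only [σ'] at hcc
      have hnox : ¬ ∃ k', k' ≤ (hist π u).length ∧
          (hist π u ++ [π u]).getD k' (π u) ∈ W := by
        rintro ⟨k', hk', hmem⟩
        rw [hist_length] at hk'
        rw [show hist π u ++ [π u] = hist π (u + 1) from (hist_succ π u).symm,
          hist_getD π (by omega)] at hmem
        exact prefW k' (by omega) hmem
      rw [dif_neg hnox] at hcc
      have hnat : π u ∉ att := by
        intro hmem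
        rcases Nat.eq_zero_or_pos u with h' | h'
        · subst h'; exact h01 hmem
        · exact hmin u hu ⟨h', Or.inr hmem⟩
      rw [if_neg hnat] at hcc
      exact hcc
    -- extend the prefix to a `σ`-consistent play
    have hρc : G.Consistent j σ (extPlay G σ j π n₁) :=
      extPlay_consistent (fun k hk hknode => hpre k hk hknode)
    have hρp : G.IsPlay (extPlay G σ j π n₁) :=
      extPlay_isPlay hσleg (fun k _ => hp k)
    have hρ0 : extPlay G σ j π n₁ 0 = q₀ := by
      rw [extPlay_agree (Nat.zero_le _), h0]
    have hρwin := hσwin _ hρp hρ0 hρc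
    have PR1 : ∀ u, 1 ≤ u → u < n₁ → π u ∉ tg V' A' (!j) := by
      rcases ewins_iff.mp hρwin with ⟨n', hn', hmem', hpr'⟩ | ⟨hav, _⟩
      · have hn₁n' : n₁ ≤ n' := by
          by_contra hcon
          push_neg at hcon
          rw [extPlay_agree (by omega)] at hmem'
          exact hmin n' hcon ⟨hn', hTj' hmem'⟩
        intro u hu1 hu2 hmem
        have := hpr' u hu1 (by omega)
        rw [extPlay_agree (by omega)] at this
        exact this hmem
      · exfalso
        have : extPlay G σ j π n₁ n₁ ∈ V' ∪ A' := by
          rw [extPlay_agree le_rfl]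
          refine tg_subset V' A' j ?_
          rcases hEv1.2 with h' | h'
          · rcases h' with h'' | h''
            · exact hTj h''
            · exact hWa (Or.inl h'')
          · exact hWa (Or.inr h')
        exact hav n₁ hEv1.1 this
    have prefD : ∀ v, 1 ≤ v → v < n₁ → π v ∉ V ∪ A := by
      intro v hv1 hv2
      refine (not_mem_union_iff (j := j)).mpr ⟨?_, ?_⟩
      · intro hmem
        exact hmin v hv2 ⟨hv1, Or.inl (Or.inl hmem)⟩
      · intro hmem
        exact PR1 v hv1 hv2 (hTnj hmem)
    rcases hEv1.2 with h' | h'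
    · rcases h' with h'' | h''
      · exact ewins_iff.mpr (Or.inl ⟨n₁, hEv1.1, h'',
          fun m hm1 hm2 hmem => prefD m hm1 hm2 (tg_subset V A (!j) hmem)⟩)
      · exact S n₁ h'' prefW prefD
    · exact K n₁ h' prefW prefD
  · -- no event: the play is consistent with `σ` itself
    push_neg at hEv
    have hcσ : G.Consistent j σ π := by
      intro u hunode
      have hcc := hceval u hunode
      simp only [σ'] at hcc
      have hnox : ¬ ∃ k', k' ≤ (hist π u).length ∧
          (hist π u ++ [π u]).getD k' (π u) ∈ W := by
        rintro ⟨k', hk', hmem⟩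
        rw [hist_length] at hk'
        rw [show hist π u ++ [π u] = hist π (u + 1) from (hist_succ π u).symm,
          hist_getD π (by omega)] at hmem
        rcases Nat.eq_zero_or_pos k' with h' | h'
        · subst h'; exact h00 hmem
        · exact hEv k' h' (Or.inl (Or.inr hmem))
      rw [dif_neg hnox] at hcc
      have hnat : π u ∉ att := by
        intro hmem
        rcases Nat.eq_zero_or_pos u with h' | h'
        · subst h'; exact h01 hmem
        · exact hEv u h' (Or.inr hmem)
      rw [if_neg hnat] at hcc
      exact hcc
    have hw := hσwin π hp h0 hcσ
    rcases ewins_iff.mp hw with ⟨n', hn', hmem', _⟩ | ⟨hav, hpar⟩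
    · exact absurd (hTj' hmem') (fun hh => hEv n' hn' (by
        rcases hh with h'' | h''
        · rcases h'' with h3 | h3
          · exact Or.inl (Or.inl h3)
          · exact Or.inl (Or.inr h3)
        · exact Or.inr h''))
    · exact ewins_iff.mpr (Or.inr ⟨fun n hn hmem => hav n hn (hVA' hmem), hpar⟩)

/-! ### Winning the cleaned game from the domain -/

lemma cleaned_win {V A V₁ A₁ : Set Q} {i : Bool} {M : Set Q}
    (hMD : M ⊆ (V ∪ A)ᶜ)
    (hpar : ∀ π : ℕ → Q, (∀ n, π n ∈ (V ∪ A)ᶜ) → (∀ N, ∃ n, N ≤ n ∧ π n ∈ M) →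
      G.WinsPlay i π)
    (hclop : ∀ q ∈ (V ∪ A)ᶜ, q ∈ G.nodes (!i) → ∀ x, G.R q x → x ∉ tg V A (!i))
    (hcli : ∀ q ∈ (V ∪ A)ᶜ, q ∈ G.nodes i → ∃ x, G.R q x ∧ x ∈ (V ∪ A)ᶜ)
    (hV₁ : tg V₁ A₁ i = tg V A i ∪ (M ∪ G.attrS i M (V ∪ A)ᶜ))
    (hA₁ : tg V₁ A₁ (!i) = tg V A (!i))
    (hWin1 : ∀ q, q ∈ (V ∪ A)ᶜ → q ∉ M ∪ G.attrS i M (V ∪ A)ᶜ →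
      q ∈ G.EWinRegion i V₁ A₁) :
    ∀ q₀ ∈ (V ∪ A)ᶜ, q₀ ∈ G.EWinRegion i V A := by
  classical
  set D : Set Q := (V ∪ A)ᶜ with hD
  set atr : Set Q := G.attrS i M D with hatr
  set P : Set Q := D \ (M ∪ atr) with hP
  intro q₀ hq₀
  let dmove : Q → Q := fun q => if hq : ∃ x, G.R q x ∧ x ∈ D then hq.choose else G.anySucc q
  have dmove_R : ∀ q, G.R q (dmove q) := by
    intro q
    simp only [dmove]
    split
    · next hq => exact hq.choose_spec.1
    · exact G.anySucc_R q
  have dmove_D : ∀ q, q ∈ D → q ∈ G.nodes i → dmove q ∈ D := by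
    intro q hq hn
    have hex := hcli q hq hn
    simp only [dmove]
    rw [dif_pos hex]
    exact hex.choose_spec.2
  let σ' : List Q → Q → Q := fun h x =>
    if x ∈ P then
      G.wstrat i V₁ A₁ ((lastSeg P h).headD x) (lastSeg P h) x
    else if x ∈ M then dmove x
    else if x ∈ atr then G.amove i M D x
    else G.anySucc x
  have hleg : G.Legal i σ' := by
    intro h x hx
    simp only [σ']
    split
    · exact wstrat_legal i V₁ A₁ _ _ x hx
    · split
      · exact dmove_R x
      · split
        · exact G.amove_R x
        · exact G.anySucc_R x
  refine ⟨σ', hleg, fun π hp h0 hc => ?_⟩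
  have hceval : ∀ u, π u ∈ G.nodes i → π (u + 1) = σ' (hist π u) (π u) := fun u hu => hc u hu
  -- consistency within a maximal `P`-segment
  have hseg : ∀ N kk, (N = 0 ∨ π (N - 1) ∉ P) → (∀ u, N ≤ u → u ≤ N + kk → π u ∈ P) →
      π (N + kk) ∈ G.nodes i →
      π (N + kk + 1) =
        G.wstrat i V₁ A₁ (π N) (hist (fun u => π (N + u)) kk) (π (N + kk)) := by
    intro N kk hbd hall hnode
    have hcc := hceval (N + kk) hnode
    simp only [σ'] at hcc
    rw [if_pos (hall (N + kk) (by omega) le_rfl)] at hcc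
    have hls : lastSeg P (hist π (N + kk)) = hist (fun u => π (N + u)) kk := by
      have := lastSeg_hist (P := P) (π := π) (N := N) hbd (N + kk) (by omega)
        (fun u h1 h2 => hall u h1 (by omega))
      simpa [show N + kk - N = kk from by omega] using this
    rw [hls, hist_headD] at hcc
    have hhd : (if kk = 0 then π (N + kk) else (fun u => π (N + u)) 0) = π N := by
      split
      · next h => subst h; rfl
      · rfl
    rw [hhd] at hcc
    exact hcc
  -- moves of the subgame strategy stay in `D ∪ tg V A i`
  have hmove : ∀ N kk, (N = 0 ∨ π (N - 1) ∉ P) → (∀ u, N ≤ u → u ≤ N + kk → π u ∈ P) →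
      π (N + kk) ∈ G.nodes i → π (N + kk + 1) ∈ D ∪ tg V A i := by
    intro N kk hbd hall hnode
    have hgP : ∀ u, u ≤ kk → π (N + u) ∈ P := fun u hu => hall (N + u) (by omega) (by omega)
    have hg0 : π N ∈ P := by
      have := hgP 0 (by omega)
      simpa using this
    have hgwin : π N ∈ G.EWinRegion i V₁ A₁ := hWin1 (π N) hg0.1 hg0.2
    have hgc : ∀ k, k < kk → π (N + k) ∈ G.nodes i →
        π (N + (k + 1)) = G.wstrat i V₁ A₁ (π N) (hist (fun u => π (N + u)) k) (π (N + k)) := by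
      intro k hk hknode
      have := hseg N k hbd (fun u h1 h2 => hall u h1 (by omega)) hknode
      rwa [show N + k + 1 = N + (k + 1) from by omega] at this
    have hρc : G.Consistent i (G.wstrat i V₁ A₁ (π N))
        (extPlay G (G.wstrat i V₁ A₁ (π N)) i (fun u => π (N + u)) kk) :=
      extPlay_consistent hgc
    have hρp : G.IsPlay (extPlay G (G.wstrat i V₁ A₁ (π N)) i (fun u => π (N + u)) kk) :=
      extPlay_isPlay (wstrat_legal i V₁ A₁ (π N)) (fun k _ => hp (N + k))
    have hρwin : G.EWinsPlay i V₁ A₁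
        (extPlay G (G.wstrat i V₁ A₁ (π N)) i (fun u => π (N + u)) kk) :=
      wstrat_win hgwin hρp (extPlay_agree (Nat.zero_le _)) hρc
    have hnext : π (N + kk + 1) =
        extPlay G (G.wstrat i V₁ A₁ (π N)) i (fun u => π (N + u)) kk (kk + 1) := by
      have h1 := hseg N kk hbd hall hnode
      have hq : extPlay G (G.wstrat i V₁ A₁ (π N)) i (fun u => π (N + u)) kk kk ∈
          G.nodes i := by
        rw [extPlay_agree le_rfl]; exact hnode
      rw [extPlay_succ, if_neg (show ¬ kk + 1 ≤ kk from by omega)]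
      simp only [if_pos hq]
      rw [show (List.ofFn fun l : Fin kk =>
          extPlay G (G.wstrat i V₁ A₁ (π N)) i (fun u => π (N + u)) kk ↑l) =
        hist (extPlay G (G.wstrat i V₁ A₁ (π N)) i (fun u => π (N + u)) kk) kk from rfl]
      rw [extPlay_hist_agree le_rfl, extPlay_agree le_rfl]
      exact h1
    by_contra hcon
    have hxVA : π (N + kk + 1) ∈ V ∪ A := by
      by_contra h
      exact hcon (Or.inl h)
    have hxti : π (N + kk + 1) ∉ tg V A i := fun h => hcon (Or.inr h)
    have hxtni : π (N + kk + 1) ∈ tg V A (!i) := by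
      rw [← tg_union V A i] at hxVA
      rcases hxVA with h | h
      · exact absurd h hxti
      · exact h
    have hx1 : extPlay G (G.wstrat i V₁ A₁ (π N)) i (fun u => π (N + u)) kk (kk + 1) ∈
        tg V₁ A₁ (!i) := by rw [hA₁, ← hnext]; exact hxtni
    have hx2 : extPlay G (G.wstrat i V₁ A₁ (π N)) i (fun u => π (N + u)) kk (kk + 1) ∉
        tg V₁ A₁ i := by
      rw [hV₁, ← hnext]
      rintro (h | h)
      · exact hxti h
      · have hxd : π (N + kk + 1) ∈ D := by
          rcases h with h' | h'
          · exact hMD h'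
          · exact attrS_subset_dom h'
        exact hxd hxVA
    rcases ewins_iff.mp hρwin with ⟨n', hn', hmem', hpr'⟩ | ⟨hav, _⟩
    · rcases le_or_gt n' kk with h' | h'
      · rw [extPlay_agree h'] at hmem'
        have hgn' := hgP n' h'
        rw [hV₁] at hmem'
        rcases hmem' with h'' | h''
        · exact hgn'.1 (tg_subset V A i h'')
        · exact hgn'.2 h''
      · rcases Nat.lt_or_ge n' (kk + 2) with h'' | h''
        · have : n' = kk + 1 := by omega
          subst this
          exact hx2 hmem'
        · exact hpr' (kk + 1) (by omega) (by omega) hx1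
    · exact hav (kk + 1) (by omega) (tg_subset V₁ A₁ (!i) hx1)
  -- the invariant: the play stays in `D` until it possibly hits `tg V A i`
  have hinv : ∀ n, (∀ u, u ≤ n → π u ∈ D) ∨
      (∃ t, 1 ≤ t ∧ t ≤ n ∧ π t ∈ tg V A i ∧ ∀ u, u < t → π u ∈ D) := by
    intro n
    induction n with
    | zero =>
      left
      intro u hu
      rw [Nat.le_zero.mp hu, h0]
      exact hq₀
    | succ nn ih =>
      rcases ih with hall | ⟨t, h1, h2, h3, h4⟩
      · have hnnD : π nn ∈ D := hall nn le_rfl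
        have hstep : π (nn + 1) ∈ D ∪ tg V A i := by
          rcases node_cases i (π nn) with hni | hnop
          · by_cases hPm : π nn ∈ P
            · have hNex : ∃ N, ∀ u, N ≤ u → u ≤ nn → π u ∈ P := by
                refine ⟨nn, fun u h1 h2 => ?_⟩
                have : u = nn := by omega
                rw [this]; exact hPm
              set N := Nat.find hNex with hN
              have hNspec : ∀ u, N ≤ u → u ≤ nn → π u ∈ P := Nat.find_spec hNex
              have hNle : N ≤ nn := Nat.find_le (by
                refine fun u h1 h2 => ?_
                have : u = nn := by omega
                rw [this]; exact hPm)
              have hNbd : N = 0 ∨ π (N - 1) ∉ P := by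
                rcases Nat.eq_zero_or_pos N with h' | h'
                · exact Or.inl h'
                · right
                  intro hmem
                  have hmin := Nat.find_min hNex (m := N - 1) (by omega)
                  push_neg at hmin
                  obtain ⟨u, hu1, hu2, hu3⟩ := hmin
                  rcases Nat.lt_or_ge u N with h'' | h''
                  · have : u = N - 1 := by omega
                    subst this
                    exact hu3 hmem
                  · exact hu3 (hNspec u h'' hu2)
              have := hmove N (nn - N) hNbd
                (fun u hu1 hu2 => hNspec u hu1 (by omega))
                (by rw [show N + (nn - N) = nn from by omega]; exact hni)
              rwa [show N + (nn - N) + 1 = nn + 1 from by omega] at this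
            · by_cases hMm : π nn ∈ M
              · have hcc := hceval nn hni
                simp only [σ'] at hcc
                rw [if_neg hPm, if_pos hMm] at hcc
                rw [hcc]
                exact Or.inl (dmove_D _ hnnD hni)
              · have hAm : π nn ∈ atr := by
                  by_contra hno
                  exact hPm ⟨hnnD, fun hmem => by
                    rcases hmem with h' | h'
                    · exact hMm h'
                    · exact hno h'⟩
                have hcc := hceval nn hni
                simp only [σ'] at hcc
                rw [if_neg hPm, if_neg hMm, if_pos hAm] at hcc
                obtain ⟨ℓ, hℓ⟩ := mem_attrS.mp hAm
                have hsp := amove_spec (G := G) hℓ hni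
                rw [hcc]
                left
                rcases hsp with h' | h'
                · exact hMD h'
                · exact attrN_subset_dom _ h'
          · have hnotg := hclop (π nn) hnnD hnop (π (nn + 1)) (hp nn)
            by_cases hD' : π (nn + 1) ∈ V ∪ A
            · right
              rw [← tg_union V A i] at hD'
              rcases hD' with h' | h'
              · exact h'
              · exact absurd h' hnotg
            · exact Or.inl hD'
        rcases hstep with h' | h'
        · left
          intro u hu
          rcases Nat.lt_or_ge u (nn + 1) with h'' | h''
          · exact hall u (by omega)
          · have : u = nn + 1 := by omega
            rw [this]; exact h'
        · right
          exact ⟨nn + 1, by omega, le_rfl, h', fun u hu => hall u (by omega)⟩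
      · right
        exact ⟨t, h1, by omega, h3, h4⟩
  by_cases hev : ∃ t, 1 ≤ t ∧ π t ∈ tg V A i ∧ ∀ u, u < t → π u ∈ D
  · obtain ⟨t, ht1, ht2, ht3⟩ := hev
    refine ewins_iff.mpr (Or.inl ⟨t, ht1, ht2, fun mm h1 h2 hmem => ?_⟩)
    exact (ht3 mm h2) (tg_subset V A (!i) hmem)
  · have hallD : ∀ n, π n ∈ D := by
      intro n
      rcases hinv n with h | ⟨t, h1, h2, h3, h4⟩
      · exact h n le_rfl
      · exact absurd ⟨t, h1, h3, h4⟩ hev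
    by_cases hMfin : ∃ N₀, ∀ n, N₀ ≤ n → π n ∉ M
    · obtain ⟨N₀, hN₀⟩ := hMfin
      have hnoatr : ∀ t, N₀ ≤ t → π t ∉ atr := by
        intro t ht hmem
        obtain ⟨ℓ, hℓ⟩ := mem_attrS.mp hmem
        have hamove : ∀ u, t ≤ u → (∀ v, t ≤ v → v ≤ u → π v ∈ G.attrS i M D \ M) →
            π u ∈ G.nodes i → π (u + 1) = G.amove i M D (π u) := by
          intro u hu hctx hunode
          have hcc := hceval u hunode
          simp only [σ'] at hcc
          have hu1 := hctx u hu le_rfl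
          rw [if_neg (fun hmem' : π u ∈ P => hmem'.2 (Or.inr hu1.1))] at hcc
          rw [if_neg hu1.2, if_pos hu1.1] at hcc
          exact hcc
        obtain ⟨t', ht'1, ht'2, _⟩ := attrReach hp hamove ℓ t le_rfl hℓ
          (fun v h1 h2 => absurd (lt_of_le_of_lt h1 h2) (lt_irrefl _))
        exact hN₀ t' (by omega) ht'2
      have hPex : ∃ N, ∀ u, N ≤ u → π u ∈ P := by
        refine ⟨N₀, fun u hu => ⟨hallD u, fun hmem => ?_⟩⟩
        rcases hmem with h' | h'
        · exact hN₀ u hu h'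
        · exact hnoatr u hu h'
      set N := Nat.find hPex with hN
      have hNspec : ∀ u, N ≤ u → π u ∈ P := Nat.find_spec hPex
      have hNbd : N = 0 ∨ π (N - 1) ∉ P := by
        rcases Nat.eq_zero_or_pos N with h' | h'
        · exact Or.inl h'
        · right
          intro hmem
          have hmin := Nat.find_min hPex (m := N - 1) (by omega)
          push_neg at hmin
          obtain ⟨u, hu1, hu2⟩ := hmin
          rcases Nat.lt_or_ge u N with h'' | h''
          · have : u = N - 1 := by omega
            subst this
            exact hu2 hmem
          · exact hu2 (hNspec u h'')
      have hctail : G.Consistent i (G.wstrat i V₁ A₁ (π N)) (fun k => π (N + k)) := by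
        intro k hk
        exact hseg N k hNbd (fun u h1 _ => hNspec u h1) hk
      have hNP := hNspec N le_rfl
      have hwin := wstrat_win (hWin1 (π N) hNP.1 hNP.2) (isPlay_shift hp N) rfl hctail
      rcases ewins_iff.mp hwin with ⟨n', hn', hmem', _⟩ | ⟨_, hpar⟩
      · exfalso
        have hthis := hNspec (N + n') (by omega)
        rw [hV₁] at hmem'
        rcases hmem' with h' | h'
        · exact hthis.1 (tg_subset V A i h')
        · exact hthis.2 h'
      · exact ewins_iff.mpr (Or.inr ⟨fun n _ => hallD n, (winsPlay_shift π N).mp hpar⟩)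
    · push_neg at hMfin
      refine ewins_iff.mpr (Or.inr ⟨fun n _ => hallD n, hpar π hallD ?_⟩)
      intro N₀
      obtain ⟨n, hn1, hn2⟩ := hMfin N₀
      exact ⟨n, hn1, hn2⟩

/-! ### Assembling the induction -/

lemma bool_or_iff (i : Bool) (P : Bool → Prop) : (P false ∨ P true) ↔ (P i ∨ P (!i)) := by
  cases i <;> simp <;> tauto

/-- Enlarge the target of player `j` by `S`. -/
def updV (V A : Set Q) (j : Bool) (S : Set Q) : Set Q := V ∪ (if j then ∅ else S)

def updA (V A : Set Q) (j : Bool) (S : Set Q) : Set Q := A ∪ (if j then S else ∅)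

lemma upd_tg_same (V A : Set Q) (j : Bool) (S : Set Q) :
    tg (updV V A j S) (updA V A j S) j = tg V A j ∪ S := by
  cases j <;> simp [updV, updA, tg]

lemma upd_tg_other (V A : Set Q) (j : Bool) (S : Set Q) :
    tg (updV V A j S) (updA V A j S) (!j) = tg V A (!j) := by
  cases j <;> simp [updV, updA, tg]

lemma upd_union (V A : Set Q) (j : Bool) (S : Set Q) :
    updV V A j S ∪ updA V A j S = (V ∪ A) ∪ S := by
  cases j <;> (ext x; simp [updV, updA]; tauto)

lemma edet_base {V A : Set Q} (hD : ((V ∪ A)ᶜ : Set Q) = ∅) (q : Q) :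
    q ∈ G.EWinRegion false V A ∨ q ∈ G.EWinRegion true V A := by
  have hsucc : ∀ x y : Q, G.R x y → y ∈ V ∪ A := by
    intro x y h
    by_contra hc
    rw [Set.eq_empty_iff_forall_notMem] at hD
    exact hD y hc
  rcases node_cases false q with hq | hq
  · by_cases hex : ∃ x, G.R q x ∧ x ∈ V
    · left
      obtain ⟨x, h1, h2⟩ := hex
      exact onestep (j := false) (Or.inl ⟨hq, x, h1, Or.inl h2⟩)
    · right
      push_neg at hex
      refine onestep (j := true) (Or.inr ⟨hq, fun x hR => Or.inl ?_⟩)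
      have := hsucc q x hR
      rcases this with h' | h'
      · exact absurd h' (hex x hR)
      · exact h'
  · by_cases hex : ∃ x, G.R q x ∧ x ∈ A
    · right
      obtain ⟨x, h1, h2⟩ := hex
      exact onestep (j := true) (Or.inl ⟨hq, x, h1, Or.inl h2⟩)
    · left
      push_neg at hex
      refine onestep (j := false) (Or.inr ⟨hq, fun x hR => Or.inl ?_⟩)
      have := hsucc q x hR
      rcases this with h' | h'
      · exact h'
      · exact absurd h' (hex x hR)

lemma edet [Fintype Q] :
    ∀ (n : ℕ) (V A : Set Q), ((V ∪ A)ᶜ : Set Q).ncard ≤ n →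
      ∀ q : Q, q ∈ G.EWinRegion false V A ∨ q ∈ G.EWinRegion true V A := by
  intro n
  induction n with
  | zero =>
    intro V A hcard q
    have hD : ((V ∪ A)ᶜ : Set Q) = ∅ := by
      have := Set.ncard_eq_zero (Set.toFinite _) |>.mp (Nat.le_zero.mp hcard)
      exact this
    exact edet_base hD q
  | succ nn ih =>
    intro V A hcard q
    by_cases hD : ((V ∪ A)ᶜ : Set Q) = ∅
    · exact edet_base hD q
    · -- the domain is nonempty
      classical
      set D : Set Q := (V ∪ A)ᶜ with hDdef
      by_cases hB : G.attrS false (tg V A false) D = ∅ ∧ G.attrS true (tg V A true) D = ∅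
      · -- cleaned case
        have hBb : ∀ b : Bool, G.attrS b (tg V A b) D = ∅ := by
          intro b; cases b
          · exact hB.1
          · exact hB.2
        have hDne : D.Nonempty := Set.nonempty_iff_ne_empty.mpr hD
        have himne : (G.p '' D).Nonempty := hDne.image _
        set m : ℕ := sInf (G.p '' D) with hm
        have hmmem : m ∈ G.p '' D := Nat.sInf_mem himne
        set i : Bool := decide (Odd m) with hi
        set Mset : Set Q := {x | x ∈ D ∧ G.p x = m} with hMset
        have hMD : Mset ⊆ D := fun x hx => hx.1
        obtain ⟨qm, hqmD, hqmp⟩ := hmmem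
        have hqmM : qm ∈ Mset := ⟨hqmD, hqmp⟩
        -- parity hypothesis
        have hpar : ∀ π : ℕ → Q, (∀ k, π k ∈ D) → (∀ N, ∃ k, N ≤ k ∧ π k ∈ Mset) →
            G.WinsPlay i π := by
          intro π hπD hio
          have hmem : m ∈ G.InfPrio π := by
            intro N
            obtain ⟨k, hk1, hk2⟩ := hio N
            exact ⟨k, hk1, hk2.2⟩
          have hsinf : sInf (G.InfPrio π) = m := by
            apply le_antisymm
            · exact Nat.sInf_le hmem
            · refine le_csInf ⟨m, hmem⟩ ?_
              intro c hc
              obtain ⟨k, _, hk⟩ := hc 0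
              rw [← hk]
              exact Nat.sInf_le ⟨π k, hπD k, rfl⟩
          unfold WinsPlay
          rw [hsinf]
          by_cases ho : Odd m
          · simp [hi, ho]
          · simp [hi, ho, Nat.not_odd_iff_even.mp ho]
        -- cleaned facts
        have hclop : ∀ x ∈ D, x ∈ G.nodes (!i) → ∀ y, G.R x y → y ∉ tg V A (!i) := by
          intro x hx hnx y hR hy
          have : x ∈ G.attrS (!i) (tg V A (!i)) D := attrS_step_j hx hnx hR hy
          rw [hBb (!i)] at this
          exact this
        have hcli : ∀ x ∈ D, x ∈ G.nodes i → ∃ y, G.R x y ∧ y ∈ D := by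
          intro x hx hnx
          by_contra hcon
          push_neg at hcon
          have hnoti : ∀ y, G.R x y → y ∉ tg V A i := by
            intro y hR hy
            have : x ∈ G.attrS i (tg V A i) D := attrS_step_j hx hnx hR hy
            rw [hBb i] at this
            exact this
          have hallopp : ∀ y, G.R x y → y ∈ tg V A (!i) := by
            intro y hR
            have h1 := hcon y hR
            have h2 : y ∈ V ∪ A := by
              by_contra hh
              exact h1 hh
            rw [← tg_union V A i] at h2
            rcases h2 with h' | h'
            · exact absurd h' (hnoti y hR)
            · exact h'
          have hxn : x ∈ G.nodes (!(!i)) := by rw [Bool.not_not]; exact hnx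
          have : x ∈ G.attrS (!i) (tg V A (!i)) D := attrS_step_opp hx hxn hallopp
          rw [hBb (!i)] at this
          exact this
        -- game 1
        set Attr' : Set Q := Mset ∪ G.attrS i Mset D with hAttr'
        have hAttrD : Attr' ⊆ D := Set.union_subset hMD attrS_subset_dom
        set V₁ : Set Q := updV V A i Attr' with hV₁def
        set A₁ : Set Q := updA V A i Attr' with hA₁def
        have hV₁ : tg V₁ A₁ i = tg V A i ∪ Attr' := upd_tg_same V A i Attr'
        have hA₁ : tg V₁ A₁ (!i) = tg V A (!i) := upd_tg_other V A i Attr'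
        have hU₁ : V₁ ∪ A₁ = (V ∪ A) ∪ Attr' := upd_union V A i Attr'
        have hcard1 : ((V₁ ∪ A₁)ᶜ : Set Q).ncard ≤ nn := by
          have hss : ((V₁ ∪ A₁)ᶜ : Set Q) ⊂ D := by
            rw [hU₁, Set.compl_union]
            constructor
            · exact Set.inter_subset_left
            · intro hsub
              have h1 : qm ∈ D := hqmD
              have h2 := hsub h1
              exact h2.2 (Or.inl hqmM)
          have := Set.ncard_lt_ncard hss (Set.toFinite _)
          omega
        have det1 := ih V₁ A₁ hcard1
        by_cases hcaseb : ∃ x, x ∈ D ∧ x ∉ Attr' ∧ x ∈ G.EWinRegion (!i) V₁ A₁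
        · -- case (b): the opponent wins somewhere in the subgame
          obtain ⟨qb, hqbD, hqbA, hqbW⟩ := hcaseb
          set Wset : Set Q := {x | x ∈ D ∧ x ∉ Attr' ∧ x ∈ G.EWinRegion (!i) V₁ A₁} with hWset
          have hWsub : Wset ⊆ D := fun x hx => hx.1
          have hWwin : ∀ r ∈ Wset, r ∈ G.EWinRegion (!i) V A := by
            intro r hr
            refine ewin_mono (V' := V₁) (A' := A₁) (j := !i) hA₁ ?_ hr.2.2
            rw [Bool.not_not, hV₁]
            exact Set.subset_union_left
          set B : Set Q := Wset ∪ G.attrS (!i) (Wset ∪ tg V A (!i)) D with hBdef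
          have hBD : B ⊆ D := Set.union_subset hWsub attrS_subset_dom
          set V₂ : Set Q := updV V A (!i) B with hV₂def
          set A₂ : Set Q := updA V A (!i) B with hA₂def
          have hV₂ : tg V₂ A₂ (!i) = tg V A (!i) ∪ B := upd_tg_same V A (!i) B
          have hA₂ : tg V₂ A₂ (!(!i)) = tg V A (!(!i)) := upd_tg_other V A (!i) B
          have hU₂ : V₂ ∪ A₂ = (V ∪ A) ∪ B := upd_union V A (!i) B
          have hcard2 : ((V₂ ∪ A₂)ᶜ : Set Q).ncard ≤ nn := by
            have hss : ((V₂ ∪ A₂)ᶜ : Set Q) ⊂ D := by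
              rw [hU₂, Set.compl_union]
              constructor
              · exact Set.inter_subset_left
              · intro hsub
                have h2 := hsub hqbD
                exact h2.2 (Or.inl ⟨hqbD, hqbA, hqbW⟩)
            have := Set.ncard_lt_ncard hss (Set.toFinite _)
            omega
          have det2 := ih V₂ A₂ hcard2 q
          have det2' := (bool_or_iff i (fun b => q ∈ G.EWinRegion b V₂ A₂)).mp det2
          refine (bool_or_iff i (fun b => q ∈ G.EWinRegion b V A)).mpr ?_
          rcases det2' with h | h
          · left
            have e2 : tg V₂ A₂ i = tg V A i := by
              have e := hA₂
              rwa [Bool.not_not] at e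
            refine ewin_mono (V' := V₂) (A' := A₂) (j := i) e2 ?_ h
            rw [hV₂]
            exact Set.subset_union_left
          · right
            refine transfer (W := Wset) hWsub hWwin ?_ ?_ ?_ ?_ h
            · rw [hV₂]
              exact Set.subset_union_left
            · rw [hV₂, hBdef]
              intro x hx
              rcases hx with h' | h'
              · exact Or.inl (Or.inl h')
              · rcases h' with h'' | h''
                · exact Or.inl (Or.inr h'')
                · exact Or.inr h''
            · rw [hV₂, hBdef]
              intro x hx
              rcases hx with h' | h'
              · exact Or.inr (Or.inl h')
              · exact Or.inr (Or.inr h')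
            · rw [hA₂]
        · -- case (a): player `i` wins everywhere in the subgame
          have hWin1 : ∀ x, x ∈ D → x ∉ Attr' → x ∈ G.EWinRegion i V₁ A₁ := by
            intro x hxD hxA
            have dd := (bool_or_iff i (fun b => x ∈ G.EWinRegion b V₁ A₁)).mp (det1 x)
            rcases dd with h | h
            · exact h
            · exact absurd ⟨x, hxD, hxA, h⟩ hcaseb
          have hDwin : ∀ x ∈ D, x ∈ G.EWinRegion i V A := by
            refine cleaned_win hMD hpar hclop hcli hV₁ hA₁ ?_
            intro x hxD hxA
            exact hWin1 x hxD hxA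
          refine (bool_or_iff i (fun b => q ∈ G.EWinRegion b V A)).mpr ?_
          rcases node_cases i q with hq | hq
          · by_cases hex : ∃ x, G.R q x ∧ x ∈ D ∪ tg V A i
            · left
              obtain ⟨x, h1, h2⟩ := hex
              refine onestep (j := i) (Or.inl ⟨hq, x, h1, ?_⟩)
              rcases h2 with h' | h'
              · exact Or.inr ⟨fun hmm => h' (tg_subset V A (!i) hmm), hDwin x h'⟩
              · exact Or.inl h'
            · right
              push_neg at hex
              have hqn : q ∈ G.nodes (!(!i)) := by rw [Bool.not_not]; exact hq
              refine onestep (j := !i) (Or.inr ⟨hqn, fun x hR => Or.inl ?_⟩)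
              have hx := hex x hR
              have hxVA : x ∈ V ∪ A := by
                by_contra hh
                exact hx (Or.inl hh)
              rw [← tg_union V A i] at hxVA
              rcases hxVA with h' | h'
              · exact absurd (Or.inr h') hx
              · exact h'
          · by_cases hex : ∃ x, G.R q x ∧ x ∈ tg V A (!i)
            · right
              obtain ⟨x, h1, h2⟩ := hex
              exact onestep (j := !i) (Or.inl ⟨hq, x, h1, Or.inl h2⟩)
            · left
              push_neg at hex
              refine onestep (j := i) (Or.inr ⟨hq, fun x hR => ?_⟩)
              have hx := hex x hR
              by_cases hxD : x ∈ V ∪ A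
              · rw [← tg_union V A i] at hxD
                rcases hxD with h' | h'
                · exact Or.inl h'
                · exact absurd h' hx
              · exact Or.inr ⟨hx, hDwin x hxD⟩
      · -- cleaning case: one of the boundary attractors is nonempty
        have hex2 : ∃ b : Bool, G.attrS b (tg V A b) D ≠ ∅ := by
          by_contra hcon
          push_neg at hcon
          exact hB ⟨hcon false, hcon true⟩
        obtain ⟨bw, hbw⟩ := hex2
        obtain ⟨qc, hqc⟩ := Set.nonempty_iff_ne_empty.mpr hbw
        have hTeq : ∀ b : Bool, G.attrS b (∅ ∪ tg V A b) D = G.attrS b (tg V A b) D :=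
          fun b => by rw [Set.empty_union]
        set V' : Set Q := V ∪ G.attrS false (tg V A false) D with hV'
        set A' : Set Q := A ∪ G.attrS true (tg V A true) D with hA'
        have hU' : V' ∪ A' = (V ∪ A) ∪
            (G.attrS false (tg V A false) D ∪ G.attrS true (tg V A true) D) := by
          rw [hV', hA']
          ext x
          simp only [Set.mem_union]
          tauto
        have hcard' : ((V' ∪ A')ᶜ : Set Q).ncard ≤ nn := by
          have hss : ((V' ∪ A')ᶜ : Set Q) ⊂ D := by
            rw [hU', Set.compl_union]
            constructor
            · exact Set.inter_subset_left
            · intro hsub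
              have h1 : qc ∈ D := attrS_subset_dom hqc
              have h2 := hsub h1
              refine h2.2 ?_
              cases bw
              · exact Or.inl hqc
              · exact Or.inr hqc
          have := Set.ncard_lt_ncard hss (Set.toFinite _)
          omega
        have det' := ih V' A' hcard' q
        have htr : ∀ b : Bool, q ∈ G.EWinRegion b V' A' → q ∈ G.EWinRegion b V A := by
          intro b
          refine fun hqq => transfer (W := (∅ : Set Q)) (Set.empty_subset _)
            (fun r hr => absurd hr (Set.notMem_empty r)) ?_ ?_ ?_ ?_ hqq
          · cases b
            · exact Set.subset_union_left
            · exact Set.subset_union_left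
          · rw [hTeq b]
            cases b
            · intro x hx
              rcases hx with h' | h'
              · exact Or.inl (Or.inl h')
              · exact Or.inr h'
            · intro x hx
              rcases hx with h' | h'
              · exact Or.inl (Or.inl h')
              · exact Or.inr h'
          · rw [hTeq b, Set.empty_union]
            cases b
            · exact Set.subset_union_right
            · exact Set.subset_union_right
          · cases b
            · exact Set.subset_union_left
            · exact Set.subset_union_left
        rcases det' with h | h
        · exact Or.inl (htr false h)
        · exact Or.inr (htr true h)

end ParityGame
open ParityGame
/-- Positional determinacy: in a parity game on a finite node set, every node
belongs to the winning region of Player 0 or to the winning region of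
Player 1. -/
theorem parity_determinacy {Q : Type} [Fintype Q] (G : ParityGame Q) :
    ∀ q : Q, q ∈ G.WinRegion false ∨ q ∈ G.WinRegion true := by
  intro q
  have h := ParityGame.edet (G := G) ((((∅ : Set Q) ∪ ∅)ᶜ : Set Q)).ncard ∅ ∅ le_rfl q
  have conv : ∀ (b : Bool) (x : Q), x ∈ G.EWinRegion b ∅ ∅ → x ∈ G.WinRegion b := by
    rintro b x ⟨σ, hleg, hwin⟩
    refine ⟨σ, hleg, fun π hp h0 hc => ?_⟩
    rcases ParityGame.ewins_iff.mp (hwin π hp h0 hc) with ⟨n, _, hmem, _⟩ | ⟨_, hpar⟩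
    · exact absurd hmem (by cases b <;> simp [ParityGame.tg])
    · exact hpar
  rcases h with h | h
  · exact Or.inl (conv false q h)
  · exact Or.inr (conv true q h)
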